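/- Let $\lambda > 0$, let $\chi : \mathbb{R} \to [0,1]$ be even, measurable, equal to $1$ on $[-1,1]$ and equal to $0$ outside $[-2,2]$. Define $\theta_\lambda(\alpha) = \operatorname{sign}(\alpha) \int_{|\alpha|}^\infty \chi(s/\lambda)\, s^{-2}\, ds$. Then there is an absolute constant $C > 0$ with $|\hat\theta_\lambda(\xi)| \le C \min\{1, |\xi|\lambda\}$ for all $\xi \in \mathbb{R}$, where $\hat\theta_\lambda(\xi) = \int \theta_\lambda(\alpha) e^{-i\alpha\xi}\, d\alpha$ (interpreted via the odd structure as $-i\int \theta_\lambda(\alpha)\sin(\alpha\xi)\,d\alpha$). -/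

import Mathlib

open MeasureTheory

open Set in
lemma tail_bound (c : ℝ → ℝ) (hble : ∀ s : ℝ, 0 < s → |c s| ≤ 1 / s ^ 2)
    {t : ℝ} (ht : 0 < t) : |∫ s in Set.Ioi t, c s| ≤ 1 / t := by
  have hrint : IntegrableOn (fun s : ℝ => s ^ (-2 : ℝ)) (Ioi t) :=
    integrableOn_Ioi_rpow_of_lt (by norm_num) ht
  have hval : ∫ s in Ioi t, s ^ (-2 : ℝ) = 1 / t := by
    rw [integral_Ioi_rpow_of_lt (by norm_num) ht]
    norm_num [Real.rpow_neg_one]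
  calc |∫ s in Set.Ioi t, c s| ≤ ∫ s in Ioi t, s ^ (-2 : ℝ) := by
        rw [← Real.norm_eq_abs]
        refine norm_integral_le_of_norm_le hrint ?_
        filter_upwards [ae_restrict_mem measurableSet_Ioi] with s hs
        have hs0 : (0:ℝ) < s := ht.trans hs
        have : s ^ (-2:ℝ) = 1 / s ^ 2 := by
          rw [Real.rpow_neg hs0.le, ← Real.rpow_natCast s 2]
          norm_num
        rw [Real.norm_eq_abs, this]
        exact hble s hs0
    _ = 1 / t := hval

lemma fubini_aux (c : ℝ → ℝ) (hm : Measurable c) {L : ℝ} (hL : 0 < L)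
    (hble : ∀ s : ℝ, 0 < s → |c s| ≤ 1 / s ^ 2) (hsupp : ∀ s : ℝ, L < s → c s = 0)
    {ξ : ℝ} (hξ : ξ ≠ 0) :
    ∫ t in Set.Ioi (0:ℝ), (∫ s in Set.Ioi t, c s) * Real.sin (t * ξ)
      = ∫ s in Set.Ioi (0:ℝ), c s * (ξ⁻¹ * (1 - Real.cos (s * ξ))) := by
  set F : ℝ → ℝ → ℝ := fun t s => if 0 < t ∧ t < s then c s * Real.sin (t * ξ) else 0 with hF
  -- measurability of the swapped uncurried function
  have hGmeas : Measurable (Function.uncurry fun s t => F t s) := by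
    have : (Function.uncurry fun s t => F t s)
        = fun p : ℝ × ℝ => if 0 < p.2 ∧ p.2 < p.1 then c p.1 * Real.sin (p.2 * ξ) else 0 := rfl
    rw [this]
    refine Measurable.ite ?_ ?_ measurable_const
    · exact (measurableSet_lt measurable_const measurable_snd).inter
        (measurableSet_lt measurable_snd measurable_fst)
    · exact (hm.comp measurable_fst).mul (Real.measurable_sin.comp (measurable_snd.mul_const ξ))
  -- slices in t
  have hslice_eq : ∀ s : ℝ, (fun t => F t s)
      = (Set.Ioo (0:ℝ) s).indicator (fun t => c s * Real.sin (t * ξ)) := by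
    intro s; funext t
    simp [hF, Set.indicator_apply, Set.mem_Ioo]
  have hslice : ∀ s : ℝ, Integrable (fun t => F t s) := by
    intro s
    rw [hslice_eq s]
    have hconst : Integrable ((Set.Ioo (0:ℝ) s).indicator (fun _ => |c s|)) :=
      ((integrableOn_const_iff).mpr (Or.inr measure_Ioo_lt_top)).integrable_indicator
        measurableSet_Ioo
    refine hconst.mono' ?_ ?_
    · exact (Measurable.indicator
        ((Real.measurable_sin.comp (measurable_id.mul_const ξ)).const_mul (c s))
        measurableSet_Ioo).aestronglyMeasurable
    · filter_upwards with t
      by_cases ht : t ∈ Set.Ioo (0:ℝ) s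
      · rw [Set.indicator_of_mem ht, Set.indicator_of_mem ht, Real.norm_eq_abs, abs_mul]
        nlinarith [Real.sin_le_one (t * ξ), Real.neg_one_le_sin (t * ξ), abs_nonneg (c s),
          abs_nonneg (Real.sin (t * ξ)), abs_le.mpr ⟨Real.neg_one_le_sin (t * ξ), Real.sin_le_one (t * ξ)⟩]
      · rw [Set.indicator_of_notMem ht, Set.indicator_of_notMem ht]
        simp
  -- bound on slice integrals
  have hslicebd : ∀ s : ℝ, (∫ t, ‖F t s‖)
      ≤ (Set.Ioc (0:ℝ) L).indicator (fun _ => |ξ|) s := by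
    intro s
    by_cases hs : 0 < s ∧ s ≤ L
    · rw [Set.indicator_of_mem (Set.mem_Ioc.mpr hs)]
      have hg : Integrable ((Set.Ioo (0:ℝ) s).indicator (fun _ => |ξ| / s)) := by
        refine ((integrableOn_const_iff).mpr (Or.inr measure_Ioo_lt_top)).integrable_indicator
          measurableSet_Ioo
      calc (∫ t, ‖F t s‖) ≤ ‖∫ t, ‖F t s‖‖ := le_abs_self _
        _ ≤ ∫ t, (Set.Ioo (0:ℝ) s).indicator (fun _ => |ξ| / s) t := by
            refine norm_integral_le_of_norm_le hg ?_
            filter_upwards with t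
            rw [norm_norm]
            by_cases hts : 0 < t ∧ t < s
            · rw [Set.indicator_of_mem (Set.mem_Ioo.mpr hts)]
              have h1 : ‖F t s‖ = |c s| * |Real.sin (t * ξ)| := by
                rw [hF]; simp only [if_pos hts]; rw [Real.norm_eq_abs, abs_mul]
              rw [h1]
              have h2 : |Real.sin (t * ξ)| ≤ s * |ξ| := by
                calc |Real.sin (t * ξ)| ≤ |t * ξ| := Real.abs_sin_le_abs
                  _ = |t| * |ξ| := abs_mul _ _
                  _ ≤ s * |ξ| := by
                      have := abs_of_pos hts.1
                      nlinarith [abs_nonneg ξ, hts.2]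
              calc |c s| * |Real.sin (t * ξ)| ≤ (1 / s ^ 2) * (s * |ξ|) := by
                    refine mul_le_mul (hble s hs.1) h2 (abs_nonneg _) (by positivity)
                _ = |ξ| / s := by field_simp [hs.1.ne']
            · have : F t s = 0 := by rw [hF]; simp only [if_neg hts]
              rw [this]
              simpa using Set.indicator_nonneg (fun (_:ℝ) _ => div_nonneg (abs_nonneg ξ) hs.1.le) t
        _ = |ξ| := by
            rw [integral_indicator measurableSet_Ioo, setIntegral_const, measureReal_def, Real.volume_Ioo,
              smul_eq_mul, ENNReal.toReal_ofReal (by linarith [hs.1])]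
            rw [sub_zero, mul_div_cancel₀ _ hs.1.ne']
    · have hz : ∀ t : ℝ, F t s = 0 := by
        intro t
        rw [hF]
        rcases not_and_or.mp hs with h | h
        · push_neg at h
          exact if_neg (by rintro ⟨h1, h2⟩; linarith)
        · push_neg at h
          have : c s = 0 := hsupp s h
          simp [this]
      simp only [hz]
      simpa using Set.indicator_nonneg (fun _ _ => abs_nonneg ξ) s
  -- integrability on the product
  have hGint : Integrable (Function.uncurry fun s t => F t s)
      ((volume : Measure ℝ).prod volume) := by
    rw [integrable_prod_iff hGmeas.aestronglyMeasurable]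
    constructor
    · exact Filter.Eventually.of_forall fun s => hslice s
    · have haesm : AEStronglyMeasurable (fun s => ∫ t, ‖F t s‖) (volume : Measure ℝ) :=
        hGmeas.norm.aestronglyMeasurable.integral_prod_right'
      have hgint : Integrable ((Set.Ioc (0:ℝ) L).indicator (fun _ => |ξ|)) :=
        ((integrableOn_const_iff).mpr (Or.inr measure_Ioc_lt_top)).integrable_indicator
          measurableSet_Ioc
      refine hgint.mono' haesm ?_
      filter_upwards with s
      rw [Real.norm_eq_abs, abs_of_nonneg (integral_nonneg fun t => norm_nonneg _)]
      exact hslicebd s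
  -- first identity
  have h1 : ∫ t in Set.Ioi (0:ℝ), (∫ s in Set.Ioi t, c s) * Real.sin (t * ξ)
      = ∫ t : ℝ, ∫ s : ℝ, F t s := by
    have hcompl : ∀ t : ℝ, t ∉ Set.Ioi (0:ℝ) → (∫ s : ℝ, F t s) = 0 := by
      intro t ht
      have : (fun s => F t s) = fun _ => 0 := by
        funext s; rw [hF]
        exact if_neg (by rintro ⟨h1, _⟩; exact ht (Set.mem_Ioi.mpr h1))
      rw [this, integral_zero]
    rw [← setIntegral_eq_integral_of_forall_compl_eq_zero hcompl]
    refine setIntegral_congr_fun measurableSet_Ioi fun t ht => ?_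
    have ht' : (0:ℝ) < t := ht
    have : (fun s => F t s) = (Set.Ioi t).indicator (fun s => c s * Real.sin (t * ξ)) := by
      funext s
      simp [hF, Set.indicator_apply, Set.mem_Ioi, ht']
    rw [this, integral_indicator measurableSet_Ioi, integral_mul_const]
  -- swap
  have h2 : ∫ t : ℝ, ∫ s : ℝ, F t s = ∫ s : ℝ, ∫ t : ℝ, F t s :=
    (integral_integral_swap hGint).symm
  -- second identity
  have h3 : ∫ s : ℝ, ∫ t : ℝ, F t s
      = ∫ s in Set.Ioi (0:ℝ), c s * (ξ⁻¹ * (1 - Real.cos (s * ξ))) := by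
    have hcompl : ∀ s : ℝ, s ∉ Set.Ioi (0:ℝ) → (∫ t : ℝ, F t s) = 0 := by
      intro s hs
      have : (fun t => F t s) = fun _ => 0 := by
        funext t; rw [hF]
        exact if_neg (by rintro ⟨ht1, ht2⟩; exact hs (Set.mem_Ioi.mpr (ht1.trans ht2)))
      rw [this, integral_zero]
    rw [← setIntegral_eq_integral_of_forall_compl_eq_zero hcompl]
    refine setIntegral_congr_fun measurableSet_Ioi fun s hs => ?_
    rw [hslice_eq s, integral_indicator measurableSet_Ioo, integral_const_mul]
    congr 1
    have hkey : ∫ t in (0:ℝ)..s, Real.sin (t * ξ) = ξ⁻¹ * (1 - Real.cos (s * ξ)) := by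
      rw [intervalIntegral.integral_comp_mul_right Real.sin hξ]
      simp [integral_sin, Real.cos_zero, smul_eq_mul]
    rw [← hkey, intervalIntegral.integral_of_le (le_of_lt hs),
      integral_Ioc_eq_integral_Ioo]
  rw [h1, h2, h3]

/-- bound `|θ̂_λ(ξ)| ≲ min{1, |ξ|λ}` for the truncated Hilbert kernel. -/
theorem stmt_14 :
    ∃ C > 0, ∀ lam : ℝ, 0 < lam → ∀ χ : ℝ → ℝ,
      Measurable χ → (∀ x, χ x ∈ Set.Icc (0:ℝ) 1) → (∀ x, χ (-x) = χ x) →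
      (∀ x ∈ Set.Icc (-1:ℝ) 1, χ x = 1) → (∀ x : ℝ, 2 < |x| → χ x = 0) →
      ∀ ξ : ℝ,
        |∫ α : ℝ, (Real.sign α * ∫ s in Set.Ioi |α|, χ (s / lam) / s ^ 2) * Real.sin (α * ξ)|
          ≤ C * min 1 (|ξ| * lam) := by
  refine ⟨5, by norm_num, ?_⟩
  intro lam hlam χ hχm hχ01 hχe hχ1 hχ0 ξ
  by_cases hξ : ξ = 0
  · subst hξ
    simp [mul_zero, Real.sin_zero, min_eq_right (zero_le_one (α := ℝ))]
  -- basic facts about c s = χ (s/lam) / s^2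
  set c : ℝ → ℝ := fun s => χ (s / lam) / s ^ 2 with hc
  have hcmeas : Measurable c :=
    (hχm.comp (measurable_id.div_const lam)).div (measurable_id.pow_const 2)
  have hcle : ∀ s : ℝ, 0 < s → |c s| ≤ 1 / s ^ 2 := by
    intro s hs
    have h1 : |c s| = χ (s / lam) / s ^ 2 := by
      rw [hc]; simp only
      rw [abs_of_nonneg (div_nonneg (hχ01 _).1 (sq_nonneg s))]
    rw [h1, div_le_div_iff₀ (by positivity) (by positivity)]
    nlinarith [(hχ01 (s / lam)).2, sq_nonneg s]
  have hsupp : ∀ s : ℝ, 2 * lam < s → c s = 0 := by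
    intro s hs
    have h2 : (2:ℝ) < |s / lam| := by
      rw [abs_of_pos (div_pos (by linarith) hlam)]
      rw [lt_div_iff₀ hlam]
      linarith
    rw [hc]; simp only
    rw [hχ0 _ h2, zero_div]
  have hIzero : ∀ t : ℝ, 2 * lam ≤ t → (∫ s in Set.Ioi t, c s) = 0 := by
    intro t ht
    rw [setIntegral_congr_fun measurableSet_Ioi
      (g := fun _ => (0:ℝ)) fun s hs => hsupp s (lt_of_le_of_lt ht hs)]
    exact integral_zero _ _
  -- rewrite the integrand through |α|
  set h : ℝ → ℝ := fun t => (∫ s in Set.Ioi t, c s) * Real.sin (t * ξ) with hh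
  have e1 : ∀ α : ℝ,
      (Real.sign α * ∫ s in Set.Ioi |α|, χ (s / lam) / s ^ 2) * Real.sin (α * ξ) = h |α| := by
    intro α
    rcases lt_trichotomy α 0 with hα | hα | hα
    · rw [hh]; simp only
      rw [Real.sign_of_neg hα, abs_of_neg hα]
      have : (-α) * ξ = -(α * ξ) := by ring
      rw [this, Real.sin_neg]
      ring
    · subst hα
      simp [hh, Real.sign_zero]
    · rw [hh]; simp only
      rw [Real.sign_of_pos hα, abs_of_pos hα]
      ring
  have heq : (∫ α : ℝ, (Real.sign α * ∫ s in Set.Ioi |α|, χ (s / lam) / s ^ 2) * Real.sin (α * ξ))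
      = 2 * ∫ t in Set.Ioi (0:ℝ), h t := by
    rw [show (fun α : ℝ => (Real.sign α * ∫ s in Set.Ioi |α|, χ (s / lam) / s ^ 2)
        * Real.sin (α * ξ)) = fun α : ℝ => h |α| from funext e1]
    exact integral_comp_abs (f := h)
  -- Bound A: |∫ h| ≤ |ξ| * (2 * lam)
  have hA : |∫ t in Set.Ioi (0:ℝ), h t| ≤ |ξ| * (2 * lam) := by
    have hgint : Integrable ((Set.Ioc (0:ℝ) (2 * lam)).indicator (fun _ => |ξ|))
        (volume.restrict (Set.Ioi 0)) :=
      ((integrableOn_const_iff).mpr (Or.inr (lt_of_le_of_lt (Measure.restrict_apply_le _ _)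
        measure_Ioc_lt_top))).integrable_indicator measurableSet_Ioc
    have hbound : ∀ᵐ t ∂(volume.restrict (Set.Ioi (0:ℝ))),
        ‖h t‖ ≤ (Set.Ioc (0:ℝ) (2 * lam)).indicator (fun _ => |ξ|) t := by
      filter_upwards [ae_restrict_mem measurableSet_Ioi] with t ht
      have ht' : (0:ℝ) < t := ht
      by_cases h2 : t ≤ 2 * lam
      · rw [Set.indicator_of_mem (Set.mem_Ioc.mpr ⟨ht', h2⟩)]
        rw [hh, Real.norm_eq_abs]; simp only
        rw [abs_mul]
        calc |∫ s in Set.Ioi t, c s| * |Real.sin (t * ξ)|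
            ≤ (1 / t) * (t * |ξ|) := by
              refine mul_le_mul (tail_bound c hcle ht') ?_ (abs_nonneg _) (by positivity)
              calc |Real.sin (t * ξ)| ≤ |t * ξ| := Real.abs_sin_le_abs
                _ = t * |ξ| := by rw [abs_mul, abs_of_pos ht']
          _ = |ξ| := by field_simp
      · push_neg at h2
        rw [hh]; simp only
        rw [hIzero t h2.le, zero_mul]
        simpa using Set.indicator_nonneg (fun (_:ℝ) _ => abs_nonneg ξ) t
    calc |∫ t in Set.Ioi (0:ℝ), h t|
        ≤ ∫ t in Set.Ioi (0:ℝ), (Set.Ioc (0:ℝ) (2 * lam)).indicator (fun _ => |ξ|) t := by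
          rw [← Real.norm_eq_abs]
          exact norm_integral_le_of_norm_le hgint hbound
      _ = |ξ| * (2 * lam) := by
          rw [integral_indicator measurableSet_Ioc,
            Measure.restrict_restrict measurableSet_Ioc,
            Set.inter_eq_left.mpr (Set.Ioc_subset_Ioi_self),
            setIntegral_const, measureReal_def, Real.volume_Ioc, smul_eq_mul,
            ENNReal.toReal_ofReal (by linarith)]
          ring
  -- Bound B: |∫ h| ≤ 5/2 via Fubini
  have hB : |∫ t in Set.Ioi (0:ℝ), h t| ≤ 5 / 2 := by
    rw [hh]
    rw [fubini_aux c hcmeas (by linarith : (0:ℝ) < 2 * lam) hcle hsupp hξ]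
    set a : ℝ := |ξ|⁻¹ with ha
    have ha0 : 0 < a := inv_pos.mpr (abs_pos.mpr hξ)
    set g1 : ℝ → ℝ := (Set.Ioc (0:ℝ) a).indicator (fun _ => |ξ| / 2) with hg1
    set g2 : ℝ → ℝ := (Set.Ioi a).indicator (fun s => 2 * |ξ|⁻¹ * s ^ (-2:ℝ)) with hg2
    have hi1 : Integrable g1 (volume.restrict (Set.Ioi 0)) :=
      ((integrableOn_const_iff).mpr (Or.inr (lt_of_le_of_lt (Measure.restrict_apply_le _ _)
        measure_Ioc_lt_top))).integrable_indicator measurableSet_Ioc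
    have hi2 : Integrable g2 (volume.restrict (Set.Ioi 0)) := by
      rw [hg2]
      refine IntegrableOn.integrable_indicator ?_ measurableSet_Ioi
      rw [IntegrableOn, Measure.restrict_restrict measurableSet_Ioi,
        Set.inter_eq_left.mpr (Set.Ioi_subset_Ioi ha0.le)]
      exact (integrableOn_Ioi_rpow_of_lt (by norm_num) ha0).const_mul _
    have hbound : ∀ᵐ s ∂(volume.restrict (Set.Ioi (0:ℝ))),
        ‖c s * (ξ⁻¹ * (1 - Real.cos (s * ξ)))‖ ≤ g1 s + g2 s := by
      filter_upwards [ae_restrict_mem measurableSet_Ioi] with s hs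
      have hs' : (0:ℝ) < s := hs
      have hcos1 : 0 ≤ 1 - Real.cos (s * ξ) := by linarith [Real.cos_le_one (s * ξ)]
      have habs : ‖c s * (ξ⁻¹ * (1 - Real.cos (s * ξ)))‖
          = |c s| * (|ξ|⁻¹ * (1 - Real.cos (s * ξ))) := by
        rw [Real.norm_eq_abs, abs_mul, abs_mul, abs_inv, abs_of_nonneg hcos1]
      rw [habs]
      by_cases hsa : s ≤ a
      · have hcos2 : 1 - Real.cos (s * ξ) ≤ (s * ξ) ^ 2 / 2 := by
          linarith [Real.one_sub_sq_div_two_le_cos (x := s * ξ)]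
        have hb1 : |c s| * (|ξ|⁻¹ * (1 - Real.cos (s * ξ))) ≤ |ξ| / 2 := by
          calc |c s| * (|ξ|⁻¹ * (1 - Real.cos (s * ξ)))
              ≤ (1 / s ^ 2) * (|ξ|⁻¹ * ((s * ξ) ^ 2 / 2)) := by
                refine mul_le_mul (hcle s hs') ?_ (by positivity) (by positivity)
                exact mul_le_mul_of_nonneg_left hcos2 (by positivity)
            _ = |ξ| / 2 := by
                rw [mul_pow]
                rw [show ξ ^ 2 = |ξ| ^ 2 from (sq_abs ξ).symm]
                field_simp [hs'.ne', abs_pos.mpr hξ]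
        calc |c s| * (|ξ|⁻¹ * (1 - Real.cos (s * ξ))) ≤ |ξ| / 2 := hb1
          _ = g1 s + g2 s := by
              rw [hg1, hg2, Set.indicator_of_mem (Set.mem_Ioc.mpr ⟨hs', hsa⟩),
                Set.indicator_of_notMem (by simpa using hsa)]
              ring
      · push_neg at hsa
        have hb2 : |c s| * (|ξ|⁻¹ * (1 - Real.cos (s * ξ))) ≤ 2 * |ξ|⁻¹ * s ^ (-2:ℝ) := by
          have hrp : s ^ (-2:ℝ) = 1 / s ^ 2 := by
            rw [Real.rpow_neg hs'.le, ← Real.rpow_natCast s 2]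
            norm_num
          rw [hrp]
          have hcos3 : 1 - Real.cos (s * ξ) ≤ 2 := by
            linarith [Real.neg_one_le_cos (s * ξ)]
          calc |c s| * (|ξ|⁻¹ * (1 - Real.cos (s * ξ)))
              ≤ (1 / s ^ 2) * (|ξ|⁻¹ * 2) := by
                refine mul_le_mul (hcle s hs') ?_ (by positivity) (by positivity)
                exact mul_le_mul_of_nonneg_left hcos3 (by positivity)
            _ = 2 * |ξ|⁻¹ * (1 / s ^ 2) := by ring
        calc |c s| * (|ξ|⁻¹ * (1 - Real.cos (s * ξ))) ≤ 2 * |ξ|⁻¹ * s ^ (-2:ℝ) := hb2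
          _ = g1 s + g2 s := by
              rw [hg1, hg2, Set.indicator_of_notMem (by simp [hsa.not_ge]),
                Set.indicator_of_mem (Set.mem_Ioi.mpr hsa)]
              ring
    have hval1 : ∫ s in Set.Ioi (0:ℝ), g1 s = 1 / 2 := by
      rw [hg1, integral_indicator measurableSet_Ioc,
        Measure.restrict_restrict measurableSet_Ioc,
        Set.inter_eq_left.mpr (Set.Ioc_subset_Ioi_self),
        setIntegral_const, measureReal_def, Real.volume_Ioc, smul_eq_mul,
        ENNReal.toReal_ofReal (by linarith), sub_zero, ha]
      have hne : |ξ| ≠ 0 := abs_ne_zero.mpr hξ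
      field_simp
    have hval2 : ∫ s in Set.Ioi (0:ℝ), g2 s = 2 := by
      rw [hg2, integral_indicator measurableSet_Ioi,
        Measure.restrict_restrict measurableSet_Ioi,
        Set.inter_eq_left.mpr (Set.Ioi_subset_Ioi ha0.le),
        integral_const_mul, integral_Ioi_rpow_of_lt (by norm_num) ha0]
      rw [ha]
      norm_num [Real.rpow_neg_one]
      field_simp
    calc |∫ s in Set.Ioi (0:ℝ), c s * (ξ⁻¹ * (1 - Real.cos (s * ξ)))|
        ≤ ∫ s in Set.Ioi (0:ℝ), (g1 s + g2 s) := by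
          rw [← Real.norm_eq_abs]
          exact norm_integral_le_of_norm_le (hi1.add hi2) hbound
      _ = (∫ s in Set.Ioi (0:ℝ), g1 s) + ∫ s in Set.Ioi (0:ℝ), g2 s := integral_add hi1 hi2
      _ = 5 / 2 := by rw [hval1, hval2]; norm_num
  -- conclusion
  rw [heq, abs_mul, abs_two]
  rcases le_or_gt 1 (|ξ| * lam) with hm | hm
  · rw [min_eq_left hm]
    linarith
  · rw [min_eq_right hm.le]
    have h0 : 0 ≤ |ξ| * lam := by positivity
    nlinarith [abs_nonneg (∫ t in Set.Ioi (0:ℝ), h t)]
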